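/- Let X be a real Banach space and f : X → ℝ ∪ {+∞} a proper lower semicontinuous convex function with 0 in the interior of its effective domain. Then there exist r > 0 and a nonempty convex set A ⊆ ℝ × X* that is bounded and weak*-compact (in the product of the standard topology on ℝ and the weak* topology on X*) such that f(x) = max_{(a,p) ∈ A} (a + p(x)) for all x with ‖x‖ ≤ r. -/

import Mathlib

set_option maxHeartbeats 1000000

open NormedSpace Set

theorem aux_bdd_above {X : Type*} [NormedAddCommGroup X] [NormedSpace ℝ X] [CompleteSpace X]
    (f : X → EReal)
    (hbot : ∀ x, f x ≠ ⊥)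
    (hlsc : LowerSemicontinuous f)
    (hconv : ∀ x y : X, ∀ a b : ℝ, 0 ≤ a → 0 ≤ b → a + b = 1 →
      f (a • x + b • y) ≤ (a : EReal) * f x + (b : EReal) * f y)
    (hdom : (0 : X) ∈ interior {x | f x ≠ ⊤}) :
    ∃ ε > (0:ℝ), ∃ M : ℝ, ∀ y : X, ‖y‖ ≤ ε → f y ≤ (M : EReal) := by
  have hex : ∃ ε' > (0:ℝ), Metric.closedBall (0:X) ε' ⊆ {x | f x ≠ ⊤} := by
    obtain ⟨ε, hε, hball⟩ := Metric.isOpen_iff.1 isOpen_interior 0 hdom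
    refine ⟨ε/2, by positivity, ?_⟩
    intro x hx
    apply hball.trans interior_subset
    rw [Metric.mem_closedBall] at hx
    rw [Metric.mem_ball]
    linarith
  obtain ⟨ε', hε', hsub⟩ := hex
  set s : Set X := Metric.closedBall (0:X) ε' with hsdef
  have hsclosed : IsClosed s := Metric.isClosed_closedBall
  haveI : CompleteSpace s := hsclosed.completeSpace_coe
  haveI : Nonempty s := ⟨⟨0, Metric.mem_closedBall_self hε'.le⟩⟩
  have hFclosed : ∀ n : ℕ, IsClosed {y : s | f ↑y ≤ (n : EReal)} := by
    intro n
    have : IsClosed (f ⁻¹' Iic ((n:ℝ) : EReal)) := hlsc.isClosed_preimage _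
    exact this.preimage continuous_subtype_val
  have hcover : ⋃ n : ℕ, {y : s | f ↑y ≤ ((n:ℝ) : EReal)} = univ := by
    ext y
    simp only [mem_iUnion, mem_setOf_eq, mem_univ, iff_true]
    have hyt : f ↑y ≠ ⊤ := hsub y.2
    refine ⟨⌈(f ↑y).toReal⌉₊, ?_⟩
    calc f ↑y = (((f ↑y).toReal : ℝ) : EReal) := (EReal.coe_toReal hyt (hbot _)).symm
      _ ≤ ((⌈(f ↑y).toReal⌉₊ : ℝ) : EReal) := by
          exact_mod_cast EReal.coe_le_coe_iff.2 (Nat.le_ceil _)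
  obtain ⟨n, x0, hx0⟩ := nonempty_interior_of_iUnion_of_closed
    (f := fun n : ℕ => {y : s | f ↑y ≤ ((n:ℝ) : EReal)}) (fun n => by exact_mod_cast hFclosed n)
    (by exact_mod_cast hcover)
  -- unpack interior in the subtype
  obtain ⟨t, hts, htopen, hxt⟩ := mem_interior.1 hx0
  obtain ⟨U, hUopen, hUt⟩ := isOpen_induced_iff.1 htopen
  have hx0U : (↑x0 : X) ∈ U := by rw [← hUt] at hxt; exact hxt
  obtain ⟨δ0, hδ0, hδ0ball⟩ := Metric.isOpen_iff.1 hUopen _ hx0U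
  set δ : ℝ := min δ0 ε' with hδdef
  have hδ : 0 < δ := lt_min hδ0 hε'
  have hδε' : δ ≤ ε' := min_le_right _ _
  have hkey : ∀ y : X, ‖y - ↑x0‖ < δ → ‖y‖ ≤ ε' → f y ≤ ((n:ℝ) : EReal) := by
    intro y hy1 hy2
    have hyU : y ∈ U := hδ0ball (by
      simp only [Metric.mem_ball, dist_eq_norm]; exact hy1.trans_le (min_le_left _ _))
    have hys : y ∈ s := by
      show dist y 0 ≤ ε'
      rw [dist_eq_norm, sub_zero]; exact hy2
    have : (⟨y, hys⟩ : s) ∈ t := by rw [← hUt]; exact hyU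
    exact hts this
  -- move to an interior ball
  have hx0norm : ‖(↑x0 : X)‖ ≤ ε' := by
    have h2 : dist (↑x0 : X) 0 ≤ ε' := x0.2
    rwa [dist_eq_norm, sub_zero] at h2
  set θ : ℝ := δ/(2*ε') with hθdef
  have hθpos : 0 < θ := by positivity
  have hθle : θ ≤ 1/2 := by
    rw [hθdef, div_le_div_iff₀ (by positivity) (by norm_num)]
    nlinarith
  set x1 : X := (1 - θ) • (↑x0 : X) with hx1def
  have hx1norm : ‖x1‖ ≤ ε' - δ/2 := by
    rw [hx1def, norm_smul]
    have h1 : |1 - θ| = 1 - θ := abs_of_nonneg (by linarith)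
    rw [Real.norm_eq_abs, h1]
    have : (1 - θ) * ‖(↑x0:X)‖ ≤ (1 - θ) * ε' := by
      apply mul_le_mul_of_nonneg_left hx0norm (by linarith)
    calc (1-θ)*‖(↑x0:X)‖ ≤ (1-θ)*ε' := this
      _ = ε' - θ * ε' := by ring
      _ ≤ ε' - δ/2 := by
          have : θ * ε' = δ/2 := by rw [hθdef]; field_simp
          linarith [this.le]
  have hx1x0 : ‖x1 - ↑x0‖ ≤ δ/2 := by
    rw [hx1def]
    have : (1 - θ) • (↑x0:X) - ↑x0 = (-θ) • (↑x0:X) := by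
      rw [sub_smul, one_smul, neg_smul]; abel
    rw [this, norm_smul, Real.norm_eq_abs, abs_of_nonpos (by linarith), neg_neg]
    have hθε : θ * ε' = δ/2 := by rw [hθdef]; field_simp
    calc θ * ‖(↑x0:X)‖ ≤ θ * ε' := mul_le_mul_of_nonneg_left hx0norm hθpos.le
      _ = δ/2 := hθε
  have hkey2 : ∀ z : X, ‖z - x1‖ < δ/4 → f z ≤ ((n:ℝ) : EReal) := by
    intro z hz
    apply hkey
    · calc ‖z - ↑x0‖ ≤ ‖z - x1‖ + ‖x1 - ↑x0‖ := norm_sub_le_norm_sub_add_norm_sub _ _ _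
        _ < δ/4 + δ/2 := by linarith
        _ < δ := by linarith
    · calc ‖z‖ = ‖(z - x1) + x1‖ := by rw [sub_add_cancel]
        _ ≤ ‖z - x1‖ + ‖x1‖ := norm_add_le _ _
        _ ≤ δ/4 + (ε' - δ/2) := by linarith
        _ ≤ ε' := by linarith
  -- f(-x1) is finite
  have hmx1 : f (-x1) ≠ ⊤ := by
    apply hsub
    show dist (-x1) 0 ≤ ε'
    rw [dist_eq_norm, sub_zero, norm_neg]
    linarith
  set c : ℝ := (f (-x1)).toReal with hcdef
  have hmc : f (-x1) = (c : EReal) := (EReal.coe_toReal hmx1 (hbot _)).symm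
  refine ⟨δ/16, by positivity, (n + c)/2, ?_⟩
  intro y hy
  have h2y : ‖(2:ℝ) • y + x1 - x1‖ < δ/4 := by
    rw [add_sub_cancel_right, norm_smul, Real.norm_eq_abs]
    rw [abs_of_nonneg (by norm_num : (0:ℝ) ≤ 2)]
    linarith
  have hf2y : f ((2:ℝ) • y + x1) ≤ ((n:ℝ) : EReal) := hkey2 _ h2y
  have hf2yt : f ((2:ℝ) • y + x1) ≠ ⊤ :=
    (hf2y.trans_lt (EReal.coe_lt_top _)).ne
  set c1 : ℝ := (f ((2:ℝ) • y + x1)).toReal with hc1def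
  have hc1 : f ((2:ℝ) • y + x1) = (c1 : EReal) := (EReal.coe_toReal hf2yt (hbot _)).symm
  have hc1n : c1 ≤ n := by
    rw [hc1] at hf2y; exact_mod_cast hf2y
  have hcombo : y = (1/2 : ℝ) • ((2:ℝ) • y + x1) + (1/2 : ℝ) • (-x1) := by
    rw [smul_add, smul_smul, smul_neg]
    norm_num
  calc f y = f ((1/2 : ℝ) • ((2:ℝ) • y + x1) + (1/2 : ℝ) • (-x1)) := by rw [← hcombo]
    _ ≤ ((1/2 : ℝ) : EReal) * f ((2:ℝ) • y + x1) + ((1/2:ℝ) : EReal) * f (-x1) :=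
        hconv _ _ _ _ (by norm_num) (by norm_num) (by norm_num)
    _ = (((1/2 * c1 + 1/2 * c : ℝ)) : EReal) := by
        rw [hc1, hmc, ← EReal.coe_mul, ← EReal.coe_mul, ← EReal.coe_add]
    _ ≤ (((n + c)/2 : ℝ) : EReal) := by
        apply EReal.coe_le_coe_iff.2; linarith

theorem aux_subgrad {X : Type*} [NormedAddCommGroup X] [NormedSpace ℝ X]
    (f : X → EReal)
    (hbot : ∀ x, f x ≠ ⊥)
    (hconv : ∀ x y : X, ∀ a b : ℝ, 0 ≤ a → 0 ≤ b → a + b = 1 →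
      f (a • x + b • y) ≤ (a : EReal) * f x + (b : EReal) * f y)
    {r M m : ℝ} (hr : 0 < r)
    (hub : ∀ y : X, ‖y‖ ≤ 2*r → f y ≤ (M : EReal))
    (hlb : ∀ y : X, ‖y‖ ≤ 2*r → (m : EReal) ≤ f y)
    {x : X} (hx : ‖x‖ ≤ r) :
    ∃ q : StrongDual ℝ X, (∀ u : X, ‖u‖ ≤ r → q u ≤ M - m) ∧
      ∀ y : X, (((f x).toReal + (q y - q x) : ℝ) : EReal) ≤ f y := by
  have hx2 : ‖x‖ ≤ 2*r := by linarith
  have hfxM : f x ≤ (M : EReal) := hub x hx2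
  have hfxt : f x ≠ ⊤ := (hfxM.trans_lt (EReal.coe_lt_top _)).ne
  set φx : ℝ := (f x).toReal with hφxdef
  have hfx : f x = (φx : EReal) := (EReal.coe_toReal hfxt (hbot _)).symm
  have hφxM : φx ≤ M := by rw [hfx] at hfxM; exact_mod_cast hfxM
  -- the strict epigraph
  set S : Set (X × ℝ) := {p : X × ℝ | f p.1 < ((p.2 : ℝ) : EReal)} with hSdef
  have hSconv : Convex ℝ S := by
    rintro ⟨y₁, t₁⟩ h₁ ⟨y₂, t₂⟩ h₂ a b ha hb hab
    simp only [hSdef, mem_setOf_eq] at h₁ h₂ ⊢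
    have h₁t : f y₁ ≠ ⊤ := (h₁.trans (EReal.coe_lt_top _)).ne
    have h₂t : f y₂ ≠ ⊤ := (h₂.trans (EReal.coe_lt_top _)).ne
    set c₁ : ℝ := (f y₁).toReal
    set c₂ : ℝ := (f y₂).toReal
    have hc₁ : f y₁ = (c₁ : EReal) := (EReal.coe_toReal h₁t (hbot _)).symm
    have hc₂ : f y₂ = (c₂ : EReal) := (EReal.coe_toReal h₂t (hbot _)).symm
    have hc₁t : c₁ < t₁ := by rw [hc₁] at h₁; exact_mod_cast h₁
    have hc₂t : c₂ < t₂ := by rw [hc₂] at h₂; exact_mod_cast h₂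
    have hcombo : a * c₁ + b * c₂ < a * t₁ + b * t₂ := by
      rcases eq_or_lt_of_le ha with h | h
      · have hb1 : b = 1 := by linarith
        simp [← h, hb1, hc₂t]
      · have : a * c₁ < a * t₁ := by exact mul_lt_mul_of_pos_left hc₁t h
        have : b * c₂ ≤ b * t₂ := mul_le_mul_of_nonneg_left hc₂t.le hb
        nlinarith
    calc f (a • y₁ + b • y₂) ≤ (a : EReal) * f y₁ + (b : EReal) * f y₂ :=
          hconv _ _ _ _ ha hb hab
      _ = ((a * c₁ + b * c₂ : ℝ) : EReal) := by
          rw [hc₁, hc₂, ← EReal.coe_mul, ← EReal.coe_mul, ← EReal.coe_add]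
      _ < ((a * t₁ + b * t₂ : ℝ) : EReal) := by exact_mod_cast hcombo
  -- the open box inside S
  have hVsub : Metric.ball (0:X) (2*r) ×ˢ Ioi M ⊆ S := by
    rintro ⟨y, t⟩ ⟨hy, ht⟩
    simp only [Metric.mem_ball, dist_eq_norm, sub_zero] at hy
    simp only [mem_Ioi] at ht
    show f y < ((t : ℝ) : EReal)
    calc f y ≤ (M : EReal) := hub y hy.le
      _ < (t : EReal) := by exact_mod_cast ht
  have hVopen : IsOpen (Metric.ball (0:X) (2*r) ×ˢ Ioi M) :=
    Metric.isOpen_ball.prod isOpen_Ioi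
  have hVint : Metric.ball (0:X) (2*r) ×ˢ Ioi M ⊆ interior S :=
    hVopen.subset_interior_iff.2 hVsub
  have hz₀ : ((0:X), M+1) ∈ interior S :=
    hVint ⟨by simp [hr], by simp⟩
  -- (x, φx) not in interior S
  have hxnot : (x, φx) ∉ interior S := by
    intro hmem
    obtain ⟨η, hη, hηball⟩ := Metric.isOpen_iff.1 isOpen_interior _ hmem
    have hmem2 : (x, φx - η/2) ∈ S := by
      apply interior_subset
      apply hηball
      rw [Metric.mem_ball]
      rw [Prod.dist_eq]
      simp only [dist_self, Real.dist_eq]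
      rw [max_lt_iff]
      constructor
      · exact hη
      · rw [abs_of_nonpos (by linarith)]; simp; linarith
    have : f x < ((φx - η/2 : ℝ) : EReal) := hmem2
    rw [hfx] at this
    have : φx < φx - η/2 := by exact_mod_cast this
    linarith
  obtain ⟨ψ, hψ⟩ := geometric_hahn_banach_open_point hSconv.interior isOpen_interior hxnot
  set c : ℝ := ψ (x, φx) with hcdef
  -- extend the inequality to all of S
  have hψS : ∀ p ∈ S, ψ p ≤ c := by
    intro p hp
    have hseg : ∀ t : ℝ, t ∈ Ioo (0:ℝ) 1 →
        ψ ((1 - t) • p + t • ((0:X), M+1)) < c := by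
      intro t ht
      apply hψ
      apply hSconv.openSegment_self_interior_subset_interior hp hz₀
      exact ⟨1 - t, t, by linarith [ht.2], ht.1, by ring, rfl⟩
    have hcont : Filter.Tendsto (fun t : ℝ => ψ ((1 - t) • p + t • ((0:X), M+1)))
        (nhdsWithin 0 (Ioi 0)) (nhds (ψ p)) := by
      have hc2 : Continuous fun t : ℝ => ψ ((1 - t) • p + t • ((0:X), M+1)) := by
        apply ψ.continuous.comp
        exact (((continuous_const.sub continuous_id).smul continuous_const).add
          (continuous_id.smul continuous_const))
      have := hc2.tendsto 0
      simp only [sub_zero, one_smul, zero_smul, add_zero] at this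
      exact this.mono_left nhdsWithin_le_nhds
    apply le_of_tendsto hcont
    filter_upwards [Ioo_mem_nhdsGT_of_mem (by constructor <;> norm_num : (0:ℝ) ∈ Ico (0:ℝ) 1)]
      with t ht
    exact (hseg t ht).le
  -- decompose ψ
  set p₀ : StrongDual ℝ X := ψ.comp (ContinuousLinearMap.inl ℝ X ℝ) with hp₀def
  set β : ℝ := ψ ((0:X), (1:ℝ)) with hβdef
  have hψeq : ∀ (y : X) (t : ℝ), ψ (y, t) = p₀ y + t * β := by
    intro y t
    have : (y, t) = (y, (0:ℝ)) + t • ((0:X), (1:ℝ)) := by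
      simp [Prod.ext_iff]
    rw [this, map_add, map_smul]
    simp only [hp₀def, ContinuousLinearMap.comp_apply, ContinuousLinearMap.inl_apply, hβdef,
      smul_eq_mul]
  have hceq : c = p₀ x + φx * β := by rw [hcdef, hψeq]
  -- β < 0
  have hβneg : β < 0 := by
    have hmem : (x, M + 1) ∈ interior S := by
      apply hVint
      constructor
      · simp only [Metric.mem_ball, dist_eq_norm, sub_zero]; linarith
      · simp only [mem_Ioi]; linarith
    have := hψ _ hmem
    rw [hψeq, hceq] at this
    nlinarith
  set q : StrongDual ℝ X := (-β)⁻¹ • p₀ with hqdef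
  have hqapp : ∀ y : X, q y = (-β)⁻¹ * p₀ y := by
    intro y; rw [hqdef]; simp
  -- the affine minorant property
  have hminor : ∀ y : X, ((φx + (q y - q x) : ℝ) : EReal) ≤ f y := by
    intro y
    rcases eq_or_ne (f y) ⊤ with hyt | hyt
    · rw [hyt]; exact le_top
    set φy : ℝ := (f y).toReal with hφydef
    have hfy : f y = (φy : EReal) := (EReal.coe_toReal hyt (hbot _)).symm
    -- for every ε > 0, (y, φy + ε) ∈ S
    have hkey : p₀ y + φy * β ≤ c := by
      apply le_of_forall_pos_le_add
      intro ε hε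
      have hmem : (y, φy + ε/(-β)) ∈ S := by
        show f y < ((φy + ε/(-β) : ℝ) : EReal)
        rw [hfy]
        have : (0:ℝ) < ε/(-β) := div_pos hε (by linarith)
        exact_mod_cast by linarith
      have := hψS _ hmem
      rw [hψeq] at this
      have hβne : -β ≠ 0 := by linarith
      have hexp : (φy + ε/(-β)) * β = φy * β - ε := by
        field_simp
        rw [mul_add, mul_neg, mul_div_assoc', mul_div_cancel_left₀ ε (by linarith : β ≠ 0)]; ring
      nlinarith [this, hexp]
    rw [hceq] at hkey
    -- divide by -β
    have hres : φx + (q y - q x) ≤ φy := by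
      rw [hqapp, hqapp]
      have hβpos : 0 < -β := by linarith
      have h2 : p₀ y - p₀ x ≤ (φy - φx) * (-β) := by nlinarith
      have h3 : (-β)⁻¹ * (p₀ y - p₀ x) ≤ φy - φx := by
        rw [inv_mul_le_iff₀ hβpos]
        linarith
      have h4 : (-β)⁻¹ * p₀ y - (-β)⁻¹ * p₀ x = (-β)⁻¹ * (p₀ y - p₀ x) := by ring
      linarith
    rw [hfy]
    exact_mod_cast hres
  refine ⟨q, ?_, fun y => hminor y⟩
  intro u hu
  have h1 := hminor (x + u)
  have h2 : ‖x + u‖ ≤ 2*r := by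
    calc ‖x + u‖ ≤ ‖x‖ + ‖u‖ := norm_add_le _ _
      _ ≤ 2*r := by linarith
  have h3 : f (x + u) ≤ (M : EReal) := hub _ h2
  have h4 : ((φx + (q (x+u) - q x) : ℝ) : EReal) ≤ (M : EReal) := h1.trans h3
  have h5 : φx + (q (x+u) - q x) ≤ M := by exact_mod_cast h4
  have h6 : q (x+u) - q x = q u := by rw [map_add]; ring
  have h7 : m ≤ φx := by
    have := hlb x hx2
    rw [hfx] at this
    exact_mod_cast this
  rw [h6] at h5
  linarith

theorem stmt0 {X : Type*} [NormedAddCommGroup X] [NormedSpace ℝ X] [CompleteSpace X]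
    (f : X → EReal)
    (hproper : (∀ x, f x ≠ ⊥) ∧ ∃ x, f x ≠ ⊤)
    (hlsc : LowerSemicontinuous f)
    (hconv : ∀ x y : X, ∀ a b : ℝ, 0 ≤ a → 0 ≤ b → a + b = 1 →
      f (a • x + b • y) ≤ (a : EReal) * f x + (b : EReal) * f y)
    (hdom : (0 : X) ∈ interior {x | f x ≠ ⊤}) :
    ∃ r > (0 : ℝ), ∃ A : Set (ℝ × StrongDual ℝ X), A.Nonempty ∧ Convex ℝ A ∧
      Bornology.IsBounded A ∧
      IsCompact ((fun ap : ℝ × StrongDual ℝ X => (ap.1, StrongDual.toWeakDual ap.2)) '' A) ∧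
      ∀ x : X, ‖x‖ ≤ r → ∃ ap ∈ A, f x = ((ap.1 + ap.2 x : ℝ) : EReal) ∧
        ∀ bq ∈ A, bq.1 + bq.2 x ≤ ap.1 + ap.2 x := by
  obtain ⟨hbot, -⟩ := hproper
  obtain ⟨ε, hεpos, M, hM⟩ := aux_bdd_above f hbot hlsc hconv hdom
  set r : ℝ := ε/2 with hrdef
  have hr : 0 < r := by positivity
  have hub : ∀ y : X, ‖y‖ ≤ 2*r → f y ≤ (M : EReal) := by
    intro y hy; exact hM y (by rw [hrdef] at hy; linarith)
  -- f is real-valued with explicit coercion on the ball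
  have hreal : ∀ y : X, ‖y‖ ≤ 2*r → f y = (((f y).toReal : ℝ) : EReal) := by
    intro y hy
    exact (EReal.coe_toReal ((hub y hy).trans_lt (EReal.coe_lt_top _)).ne (hbot _)).symm
  set f0 : ℝ := (f 0).toReal with hf0def
  have hf0 : f 0 = (f0 : EReal) := hreal 0 (by simp; positivity)
  have hf0M : f0 ≤ M := by
    have := hub 0 (by simp; positivity); rw [hf0] at this; exact_mod_cast this
  set m : ℝ := 2*f0 - M with hmdef
  have hlb : ∀ y : X, ‖y‖ ≤ 2*r → (m : EReal) ≤ f y := by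
    intro y hy
    have hy' : ‖-y‖ ≤ 2*r := by rwa [norm_neg]
    have hcombo : (0:X) = (1/2 : ℝ) • y + (1/2 : ℝ) • (-y) := by
      rw [smul_neg]; abel
    have h1 : f 0 ≤ ((1/2:ℝ) : EReal) * f y + ((1/2:ℝ) : EReal) * f (-y) := by
      rw [hcombo] at hf0 ⊢
      exact hconv _ _ _ _ (by norm_num) (by norm_num) (by norm_num)
    rw [hreal y hy, hreal (-y) hy', hf0] at h1
    rw [hreal y hy]
    rw [← EReal.coe_mul, ← EReal.coe_mul, ← EReal.coe_add] at h1
    have h1' : f0 ≤ 1/2 * (f y).toReal + 1/2 * (f (-y)).toReal := by exact_mod_cast h1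
    have h2 : (f (-y)).toReal ≤ M := by
      have := hub (-y) hy'; rw [hreal (-y) hy'] at this; exact_mod_cast this
    apply EReal.coe_le_coe_iff.2
    rw [hmdef]; linarith
  have hMm : m ≤ M := by rw [hmdef]; linarith
  set L : ℝ := (M - m)/r with hLdef
  have hL0 : 0 ≤ L := by apply div_nonneg (by linarith) hr.le
  set M' : ℝ := max |M| |m| + (M - m) with hM'def
  -- the set A
  set A : Set (ℝ × StrongDual ℝ X) :=
    {ap : ℝ × StrongDual ℝ X | ‖ap.2‖ ≤ L ∧ |ap.1| ≤ M' ∧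
      ∀ y : X, ((ap.1 + ap.2 y : ℝ) : EReal) ≤ f y} with hAdef
  -- key: subgradients give elements of A attaining the max
  have hkey : ∀ x : X, ‖x‖ ≤ r → ∃ ap ∈ A, f x = ((ap.1 + ap.2 x : ℝ) : EReal) ∧
      ∀ bq ∈ A, bq.1 + bq.2 x ≤ ap.1 + ap.2 x := by
    intro x hx
    obtain ⟨q, hqbd, hqmin⟩ := aux_subgrad f hbot hconv hr hub hlb hx
    set φx : ℝ := (f x).toReal with hφxdef
    have hx2 : ‖x‖ ≤ 2*r := by linarith
    have hfx : f x = (φx : EReal) := hreal x hx2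
    have hφxm : m ≤ φx := by
      have := hlb x hx2; rw [hfx] at this; exact_mod_cast this
    have hφxM : φx ≤ M := by
      have := hub x hx2; rw [hfx] at this; exact_mod_cast this
    have hqx : |q x| ≤ M - m := by
      rw [abs_le]
      constructor
      · have := hqbd (-x) (by rwa [norm_neg]); rw [map_neg] at this; linarith
      · exact hqbd x hx
    -- norm bound on q
    have hqnorm : ‖q‖ ≤ L := by
      apply ContinuousLinearMap.opNorm_le_bound _ hL0
      intro z
      rcases eq_or_ne z 0 with rfl | hz
      · simp
      have hznorm : 0 < ‖z‖ := norm_pos_iff.2 hz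
      have hu : ‖(r/‖z‖) • z‖ ≤ r := by
        rw [norm_smul, Real.norm_eq_abs, abs_of_nonneg (by positivity)]
        rw [div_mul_cancel₀ _ hznorm.ne']
      have h1 : q ((r/‖z‖) • z) ≤ M - m := hqbd _ hu
      have h2 : q ((-(r/‖z‖)) • z) ≤ M - m := by
        apply hqbd
        rw [norm_smul, Real.norm_eq_abs, abs_neg,
          abs_of_nonneg (by positivity : (0:ℝ) ≤ r/‖z‖), div_mul_cancel₀ _ hznorm.ne']
      rw [map_smul, smul_eq_mul] at h1 h2
      have hrz : 0 < r/‖z‖ := by positivity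
      rw [neg_mul] at h2
      have h3 : |(r/‖z‖) * q z| ≤ M - m := abs_le.2 ⟨by linarith, h1⟩
      rw [abs_mul, abs_of_nonneg hrz.le] at h3
      rw [← le_div_iff₀' hrz] at h3
      have h4 : (M - m)/(r/‖z‖) = L * ‖z‖ := by
        rw [hLdef]; field_simp
      have habs : |q z| ≤ L * ‖z‖ := by rw [← h4]; exact h3
      calc ‖q z‖ = |q z| := rfl
        _ ≤ L * ‖z‖ := habs
    set a : ℝ := φx - q x with hadef
    have hmem : (a, q) ∈ A := by
      refine ⟨hqnorm, ?_, ?_⟩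
      · have hφxabs : |φx| ≤ max |M| |m| := by
          rw [abs_le]
          constructor
          · calc -(max |M| |m|) ≤ -|m| := by simp [le_max_right]
              _ ≤ m := neg_abs_le m
              _ ≤ φx := hφxm
          · calc φx ≤ M := hφxM
              _ ≤ |M| := le_abs_self M
              _ ≤ max |M| |m| := le_max_left _ _
        rw [hadef, hM'def]
        calc |φx - q x| ≤ |φx| + |q x| := abs_sub _ _
          _ ≤ max |M| |m| + (M - m) := add_le_add hφxabs hqx
      · intro y
        have := hqmin y
        have heq : a + q y = φx + (q y - q x) := by rw [hadef]; ring
        rw [heq]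
        exact this
    refine ⟨(a, q), hmem, ?_, ?_⟩
    · show f x = ((a + q x : ℝ) : EReal)
      rw [hfx, hadef]
      norm_num
    · rintro ⟨b, p⟩ ⟨-, -, hbq⟩
      have h1 : ((b + p x : ℝ) : EReal) ≤ f x := hbq x
      rw [hfx] at h1
      have h2 : b + p x ≤ φx := by exact_mod_cast h1
      show b + p x ≤ a + q x
      rw [hadef]; linarith
  refine ⟨r, hr, A, ?_, ?_, ?_, ?_, hkey⟩
  · obtain ⟨ap, hap, -⟩ := hkey 0 (by rw [norm_zero]; exact hr.le)
    exact ⟨ap, hap⟩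
  · -- convexity
    rintro ⟨a₁, p₁⟩ ⟨h₁n, h₁a, h₁m⟩ ⟨a₂, p₂⟩ ⟨h₂n, h₂a, h₂m⟩ s t hs ht hst
    refine ⟨?_, ?_, ?_⟩
    · show ‖s • p₁ + t • p₂‖ ≤ L
      calc ‖s • p₁ + t • p₂‖ ≤ ‖s • p₁‖ + ‖t • p₂‖ := norm_add_le _ _
        _ = s * ‖p₁‖ + t * ‖p₂‖ := by
            rw [norm_smul, norm_smul, Real.norm_eq_abs, Real.norm_eq_abs,
              abs_of_nonneg hs, abs_of_nonneg ht]
        _ ≤ s * L + t * L := add_le_add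
            (mul_le_mul_of_nonneg_left h₁n hs) (mul_le_mul_of_nonneg_left h₂n ht)
        _ = L := by rw [← add_mul, hst, one_mul]
    · show |s * a₁ + t * a₂| ≤ M'
      calc |s * a₁ + t * a₂| ≤ |s * a₁| + |t * a₂| := abs_add_le _ _
        _ = s * |a₁| + t * |a₂| := by
            rw [abs_mul, abs_mul, abs_of_nonneg hs, abs_of_nonneg ht]
        _ ≤ s * M' + t * M' := add_le_add
            (mul_le_mul_of_nonneg_left h₁a hs) (mul_le_mul_of_nonneg_left h₂a ht)
        _ = M' := by rw [← add_mul, hst, one_mul]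
    · intro y
      show (((s * a₁ + t * a₂) + (s • p₁ + t • p₂) y : ℝ) : EReal) ≤ f y
      rcases eq_or_ne (f y) ⊤ with hyt | hyt
      · rw [hyt]; exact le_top
      have hfy : f y = (((f y).toReal : ℝ) : EReal) := (EReal.coe_toReal hyt (hbot _)).symm
      have h1 : a₁ + p₁ y ≤ (f y).toReal := by
        have := h₁m y; rw [hfy] at this; exact_mod_cast this
      have h2 : a₂ + p₂ y ≤ (f y).toReal := by
        have := h₂m y; rw [hfy] at this; exact_mod_cast this
      rw [hfy]
      apply EReal.coe_le_coe_iff.2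
      have happ : (s • p₁ + t • p₂) y = s * p₁ y + t * p₂ y := by
        simp [ContinuousLinearMap.add_apply, ContinuousLinearMap.smul_apply]
      rw [happ]
      calc s * a₁ + t * a₂ + (s * p₁ y + t * p₂ y)
          = s * (a₁ + p₁ y) + t * (a₂ + p₂ y) := by ring
        _ ≤ s * (f y).toReal + t * (f y).toReal := add_le_add
            (mul_le_mul_of_nonneg_left h1 hs) (mul_le_mul_of_nonneg_left h2 ht)
        _ = (f y).toReal := by rw [← add_mul, hst, one_mul]
  · -- boundedness
    apply (Metric.isBounded_closedBall (x := (0 : ℝ × StrongDual ℝ X)) (r := max M' L)).subset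
    rintro ⟨a, p⟩ ⟨hn, ha, -⟩
    rw [Metric.mem_closedBall, dist_zero_right]
    rw [Prod.norm_def]
    apply max_le_max
    · rwa [Real.norm_eq_abs]
    · exact hn
  · -- compactness
    have himg : (fun ap : ℝ × StrongDual ℝ X => (ap.1, StrongDual.toWeakDual ap.2)) '' A =
        {aq : ℝ × WeakDual ℝ X | ‖WeakDual.toStrongDual aq.2‖ ≤ L ∧ |aq.1| ≤ M' ∧
          ∀ y : X, ((aq.1 + aq.2 y : ℝ) : EReal) ≤ f y} := by
      ext ⟨a, q⟩
      constructor
      · rintro ⟨⟨b, p⟩, ⟨hn, ha, hm⟩, heq⟩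
        obtain ⟨h1, h2⟩ := Prod.mk.injEq .. ▸ heq
        simp only at h1 h2
        subst h1
        subst h2
        exact ⟨hn, ha, hm⟩
      · rintro ⟨hn, ha, hm⟩
        exact ⟨(a, WeakDual.toStrongDual q), ⟨hn, ha, hm⟩, rfl⟩
    rw [himg]
    have hK : IsCompact ((Icc (-M') M') ×ˢ
        (⇑WeakDual.toStrongDual ⁻¹' Metric.closedBall 0 L)) :=
      isCompact_Icc.prod (WeakDual.isCompact_closedBall (0 : StrongDual ℝ X) L)
    apply IsCompact.of_isClosed_subset hK
    · have hc1 : IsClosed {aq : ℝ × WeakDual ℝ X | ‖WeakDual.toStrongDual aq.2‖ ≤ L} := by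
        have : {aq : ℝ × WeakDual ℝ X | ‖WeakDual.toStrongDual aq.2‖ ≤ L} =
            Prod.snd ⁻¹' (⇑WeakDual.toStrongDual ⁻¹' Metric.closedBall 0 L) := by
          ext aq
          simp [Metric.mem_closedBall, dist_zero_right]
        rw [this]
        exact ((WeakDual.isCompact_closedBall (0 : StrongDual ℝ X) L).isClosed).preimage
          continuous_snd
      have hc2 : IsClosed {aq : ℝ × WeakDual ℝ X | |aq.1| ≤ M'} :=
        isClosed_le (continuous_abs.comp continuous_fst) continuous_const
      have hc3 : ∀ y : X, IsClosed
          {aq : ℝ × WeakDual ℝ X | ((aq.1 + aq.2 y : ℝ) : EReal) ≤ f y} := by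
        intro y
        have hcont : Continuous fun aq : ℝ × WeakDual ℝ X =>
            (((aq.1 + aq.2 y : ℝ)) : EReal) :=
          continuous_coe_real_ereal.comp
            (continuous_fst.add ((WeakDual.eval_continuous y).comp continuous_snd))
        exact isClosed_le hcont continuous_const
      have hTeq : {aq : ℝ × WeakDual ℝ X | ‖WeakDual.toStrongDual aq.2‖ ≤ L ∧ |aq.1| ≤ M' ∧
          ∀ y : X, ((aq.1 + aq.2 y : ℝ) : EReal) ≤ f y} =
          {aq : ℝ × WeakDual ℝ X | ‖WeakDual.toStrongDual aq.2‖ ≤ L} ∩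
          ({aq : ℝ × WeakDual ℝ X | |aq.1| ≤ M'} ∩
            ⋂ y : X, {aq : ℝ × WeakDual ℝ X | ((aq.1 + aq.2 y : ℝ) : EReal) ≤ f y}) := by
        ext aq
        simp only [mem_setOf_eq, mem_inter_iff, mem_iInter]
      rw [hTeq]
      exact hc1.inter (hc2.inter (isClosed_iInter hc3))
    · rintro ⟨a, q⟩ ⟨hn, ha, -⟩
      refine ⟨?_, ?_⟩
      · exact mem_Icc.2 (abs_le.1 ha)
      · show WeakDual.toStrongDual q ∈ Metric.closedBall 0 L
        rw [Metric.mem_closedBall, dist_zero_right]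
        exact hn
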